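/- Let Σ_t be a smooth IMCF solution of compact connected surfaces in M³ with R ≥ −6. Then m_H(Σ_t) (16π)^{3/2}/(2|Σ_t|^{1/2}) ≥ d/dt ∫_{Σ_t}(H² − 4) dμ + ∫_{Σ_t} ( 2|∇H|²/H² + (1/2)(λ₁−λ₂)² + R + 6 ) dμ. -/

import Mathlib

open Real MeasureTheory

/-- Crucial pointwise estimate: for a compact connected `Σ_t` (`χ(Σ_t) ≤ 2`) in `M³`
with `R ≥ −6`, combining the evolution identity
`d/dt ∫(H²−4)dμ = 4πχ + ∫(−2|∇H|²/H² − (1/2)(λ₁−λ₂)² − R − (1/2)H² − 4)dμ`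
with the Hawking mass `m_H = √(|Σ_t|/(16π)³)(16π − ∫(H²−4)dμ)` gives
`m_H (16π)^{3/2}/(2|Σ_t|^{1/2}) ≥ d/dt ∫(H²−4)dμ + ∫(2|∇H|²/H² + (1/2)(λ₁−λ₂)² + R + 6)dμ`. -/
theorem crucial_hawking_estimate {S : Type*} [MeasurableSpace S]
    (μ : Measure S) [IsFiniteMeasure μ] (χ : ℤ) (area mH Q' : ℝ)
    (H gradH2 R lam1 lam2 : S → ℝ)
    (harea : area = (μ Set.univ).toReal) (hareapos : 0 < area)
    (hχ : χ ≤ 2) (hR : ∀ x, -6 ≤ R x)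
    (hQ' : Q' = 4 * π * (χ : ℝ) +
      ∫ x, (-2 * gradH2 x / (H x) ^ 2 - (1 / 2) * (lam1 x - lam2 x) ^ 2 - R x
        - (1 / 2) * (H x) ^ 2 - 4) ∂μ)
    (hmH : mH = Real.sqrt (area / (16 * π) ^ 3) * (16 * π - ∫ x, ((H x) ^ 2 - 4) ∂μ))
    (hint1 : Integrable (fun x => gradH2 x / (H x) ^ 2) μ)
    (hint2 : Integrable (fun x => (lam1 x - lam2 x) ^ 2) μ)
    (hint3 : Integrable R μ) (hint4 : Integrable (fun x => (H x) ^ 2) μ) :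
    mH * (16 * π) ^ ((3 : ℝ) / 2) / (2 * Real.sqrt area) ≥
      Q' + ∫ x, (2 * gradH2 x / (H x) ^ 2 + (1 / 2) * (lam1 x - lam2 x) ^ 2
        + R x + 6) ∂μ := by
  have hπ : (0:ℝ) < π := Real.pi_pos
  have hc : (0:ℝ) < 16 * π := by linarith
  -- integrability of the two integrands
  have hA : Integrable (fun x => -2 * gradH2 x / (H x) ^ 2
      - (1 / 2) * (lam1 x - lam2 x) ^ 2 - R x - (1 / 2) * (H x) ^ 2 - 4) μ := by
    have e : (fun x => -2 * gradH2 x / (H x) ^ 2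
        - (1 / 2) * (lam1 x - lam2 x) ^ 2 - R x - (1 / 2) * (H x) ^ 2 - 4)
        = fun x => ((-2) * (gradH2 x / (H x) ^ 2) + (-(1/2)) * (lam1 x - lam2 x) ^ 2
          + (-1) * R x + (-(1/2)) * (H x) ^ 2) + (-4) := by
      funext x; ring
    rw [e]
    exact ((((hint1.const_mul _).add (hint2.const_mul _)).add
      (hint3.const_mul _)).add (hint4.const_mul _)).add (integrable_const _)
  have hB : Integrable (fun x => 2 * gradH2 x / (H x) ^ 2
      + (1 / 2) * (lam1 x - lam2 x) ^ 2 + R x + 6) μ := by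
    have e : (fun x => 2 * gradH2 x / (H x) ^ 2
        + (1 / 2) * (lam1 x - lam2 x) ^ 2 + R x + 6)
        = fun x => ((2 : ℝ) * (gradH2 x / (H x) ^ 2) + (1/2) * (lam1 x - lam2 x) ^ 2
          + (1 : ℝ) * R x) + (6 : ℝ) := by
      funext x; ring
    rw [e]
    exact (((hint1.const_mul _).add (hint2.const_mul _)).add
      (hint3.const_mul _)).add (integrable_const _)
  -- sum of the two integrals
  have key : (∫ x, (-2 * gradH2 x / (H x) ^ 2 - (1 / 2) * (lam1 x - lam2 x) ^ 2 - R x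
        - (1 / 2) * (H x) ^ 2 - 4) ∂μ)
      + (∫ x, (2 * gradH2 x / (H x) ^ 2 + (1 / 2) * (lam1 x - lam2 x) ^ 2
        + R x + 6) ∂μ)
      = (-(1/2)) * (∫ x, (H x) ^ 2 ∂μ) + 2 * area := by
    rw [← integral_add hA hB]
    have e : (fun x => (-2 * gradH2 x / (H x) ^ 2 - (1 / 2) * (lam1 x - lam2 x) ^ 2 - R x
        - (1 / 2) * (H x) ^ 2 - 4) + (2 * gradH2 x / (H x) ^ 2
        + (1 / 2) * (lam1 x - lam2 x) ^ 2 + R x + 6))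
        = fun x => (-(1/2)) * (H x) ^ 2 + 2 := by
      funext x; ring
    rw [e, integral_add (hint4.const_mul _) (integrable_const _),
      MeasureTheory.integral_const_mul, integral_const, harea]
    simp [smul_eq_mul]
    ring
    rfl
  have hI : (∫ x, ((H x) ^ 2 - 4) ∂μ) = (∫ x, (H x) ^ 2 ∂μ) - 4 * area := by
    rw [integral_sub hint4 (integrable_const _), integral_const, harea]
    simp [smul_eq_mul]
    ring
    rfl
  -- simplify the left-hand side
  have hrpow : (16 * π) ^ ((3 : ℝ) / 2) = Real.sqrt ((16 * π) ^ 3) := by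
    rw [Real.sqrt_eq_rpow, ← Real.rpow_natCast (16 * π) 3, ← Real.rpow_mul hc.le]
    norm_num
  have hsqrtc : (0:ℝ) < Real.sqrt ((16 * π) ^ 3) := Real.sqrt_pos.mpr (by positivity)
  have hsqrta : (0:ℝ) < Real.sqrt area := Real.sqrt_pos.mpr hareapos
  have hsd : Real.sqrt (area / (16 * π) ^ 3)
      = Real.sqrt area / Real.sqrt ((16 * π) ^ 3) := Real.sqrt_div hareapos.le _
  have hLHS : mH * (16 * π) ^ ((3 : ℝ) / 2) / (2 * Real.sqrt area)
      = (16 * π - (∫ x, ((H x) ^ 2 - 4) ∂μ)) / 2 := by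
    rw [hmH, hsd, hrpow]
    field_simp
  rw [ge_iff_le, hLHS, hQ', hI]
  have hkey' : (∫ x, (2 * gradH2 x / (H x) ^ 2 + (1 / 2) * (lam1 x - lam2 x) ^ 2
      + R x + 6) ∂μ) = (-(1/2)) * (∫ x, (H x) ^ 2 ∂μ) + 2 * area
      - (∫ x, (-2 * gradH2 x / (H x) ^ 2 - (1 / 2) * (lam1 x - lam2 x) ^ 2 - R x
        - (1 / 2) * (H x) ^ 2 - 4) ∂μ) := by linarith [key]
  rw [hkey']
  have hχ' : (χ : ℝ) ≤ 2 := by exact_mod_cast hχ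
  nlinarith [mul_le_mul_of_nonneg_left hχ' (by positivity : (0:ℝ) ≤ 4 * π)]
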